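/- In the rank-two quantized Weyl algebra A_2^{q̄,Λ}, write Z_j^k := x_j^k for k ≥ 0 and Z_j^k := y_j^{−k} for k < 0 (j = 1, 2). Then for all integers k, l ∈ ℤ: Z_1^k · Z_2^l = q_1^{k·max(l,0)} · λ_{12}^{k·l} · Z_2^l · Z_1^k. -/
import Mathlib

lemma swap_pow {A : Type*} [Semiring A] [Algebra ℂ A] {a b : A} {c : ℂ}
    (h : a * b = c • (b * a)) (m n : ℕ) :
    a ^ m * b ^ n = c ^ (m * n) • (b ^ n * a ^ m) := by
  have key : ∀ n : ℕ, a * b ^ n = c ^ n • (b ^ n * a) := by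
    intro n
    induction n with
    | zero => simp
    | succ n ih =>
      calc a * b ^ (n+1) = (a * b) * b ^ n := by rw [pow_succ', ← mul_assoc]
        _ = c • (b * (a * b ^ n)) := by rw [h, smul_mul_assoc, mul_assoc]
        _ = c • (b * (c ^ n • (b ^ n * a))) := by rw [ih]
        _ = c ^ (n+1) • (b ^ (n+1) * a) := by
            rw [mul_smul_comm, smul_smul, pow_succ' c n, pow_succ' b n, mul_assoc]
  induction m with
  | zero => simp
  | succ m ih =>
    calc a ^ (m+1) * b ^ n = a * (a ^ m * b ^ n) := by rw [pow_succ' a m, mul_assoc]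
      _ = a * (c ^ (m*n) • (b ^ n * a ^ m)) := by rw [ih]
      _ = c ^ (m*n) • ((a * b ^ n) * a ^ m) := by
          rw [mul_smul_comm, mul_assoc]
      _ = c ^ (m*n) • ((c ^ n • (b ^ n * a)) * a ^ m) := by rw [key]
      _ = c ^ ((m+1)*n) • (b ^ n * a ^ (m+1)) := by
          rw [smul_mul_assoc, smul_smul, ← pow_add, mul_assoc, ← pow_succ' a m,
            add_one_mul, add_comm (m*n) n]



/-- Defining relations of the rank-two quantized Weyl algebra `A_2^{q̄,Λ}`:
generators `x₁ = ι 0`, `x₂ = ι 1`, `y₁ = ι 2`, `y₂ = ι 3`. -/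
inductive QW2Rel (q₁ q₂ : ℂ) (lam : ℂˣ) :
    FreeAlgebra ℂ (Fin 4) → FreeAlgebra ℂ (Fin 4) → Prop
  | xx : QW2Rel q₁ q₂ lam (FreeAlgebra.ι ℂ 0 * FreeAlgebra.ι ℂ 1)
      ((q₁ * lam) • (FreeAlgebra.ι ℂ 1 * FreeAlgebra.ι ℂ 0))
  | yy : QW2Rel q₁ q₂ lam (FreeAlgebra.ι ℂ 2 * FreeAlgebra.ι ℂ 3)
      ((lam : ℂ) • (FreeAlgebra.ι ℂ 3 * FreeAlgebra.ι ℂ 2))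
  | xy : QW2Rel q₁ q₂ lam (FreeAlgebra.ι ℂ 0 * FreeAlgebra.ι ℂ 3)
      (((lam⁻¹ : ℂˣ) : ℂ) • (FreeAlgebra.ι ℂ 3 * FreeAlgebra.ι ℂ 0))
  | xy' : QW2Rel q₁ q₂ lam (FreeAlgebra.ι ℂ 1 * FreeAlgebra.ι ℂ 2)
      ((q₁ * lam) • (FreeAlgebra.ι ℂ 2 * FreeAlgebra.ι ℂ 1))
  | weyl₁ : QW2Rel q₁ q₂ lam
      (FreeAlgebra.ι ℂ 0 * FreeAlgebra.ι ℂ 2 - q₁ • (FreeAlgebra.ι ℂ 2 * FreeAlgebra.ι ℂ 0)) 1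
  | weyl₂ : QW2Rel q₁ q₂ lam
      (FreeAlgebra.ι ℂ 1 * FreeAlgebra.ι ℂ 3 - q₂ • (FreeAlgebra.ι ℂ 3 * FreeAlgebra.ι ℂ 1))
      (1 + (q₁ - 1) • (FreeAlgebra.ι ℂ 2 * FreeAlgebra.ι ℂ 0))

/-- The rank-two quantized Weyl algebra. -/
abbrev QW2 (q₁ q₂ : ℂ) (lam : ℂˣ) : Type := RingQuot (QW2Rel q₁ q₂ lam)

/-- The generators `x₁, x₂, y₁, y₂` of `QW2`. -/
noncomputable def QW2gen (q₁ q₂ : ℂ) (lam : ℂˣ) (i : Fin 4) : QW2 q₁ q₂ lam :=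
  RingQuot.mkAlgHom ℂ (QW2Rel q₁ q₂ lam) (FreeAlgebra.ι ℂ i)

/-- `Z x y k = x^k` for `k ≥ 0` and `y^{−k}` for `k < 0`. -/
noncomputable def Zword {A : Type*} [Monoid A] (x y : A) (k : ℤ) : A :=
  if 0 ≤ k then x ^ k.toNat else y ^ (-k).toNat

/-- in `A_2^{q̄,Λ}`, for all integers `k, l`,
`Z₁^k · Z₂^l = q₁^{k·max(l,0)} · λ₁₂^{k·l} · Z₂^l · Z₁^k`. -/
theorem stmt_12 (q₁ q₂ : ℂ) (hq₁ : q₁ ≠ 0 ∧ q₁ ≠ 1) (hq₂ : q₂ ≠ 0 ∧ q₂ ≠ 1)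
    (lam : ℂˣ) (k l : ℤ) :
    Zword (QW2gen q₁ q₂ lam 0) (QW2gen q₁ q₂ lam 2) k
        * Zword (QW2gen q₁ q₂ lam 1) (QW2gen q₁ q₂ lam 3) l
      = (q₁ ^ (k * max l 0) * (lam : ℂ) ^ (k * l)) •
        (Zword (QW2gen q₁ q₂ lam 1) (QW2gen q₁ q₂ lam 3) l
          * Zword (QW2gen q₁ q₂ lam 0) (QW2gen q₁ q₂ lam 2) k) := by
  obtain ⟨hq0, -⟩ := hq₁
  set x₁ := QW2gen q₁ q₂ lam 0
  set x₂ := QW2gen q₁ q₂ lam 1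
  set y₁ := QW2gen q₁ q₂ lam 2
  set y₂ := QW2gen q₁ q₂ lam 3
  have hxx : x₁ * x₂ = (q₁ * lam) • (x₂ * x₁) := by
    have := RingQuot.mkAlgHom_rel ℂ (QW2Rel.xx (q₁ := q₁) (q₂ := q₂) (lam := lam))
    simpa [x₁, x₂, QW2gen, map_mul, map_smul] using this
  have hyy : y₁ * y₂ = (lam : ℂ) • (y₂ * y₁) := by
    have := RingQuot.mkAlgHom_rel ℂ (QW2Rel.yy (q₁ := q₁) (q₂ := q₂) (lam := lam))
    simpa [y₁, y₂, QW2gen, map_mul, map_smul] using this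
  have hxy : x₁ * y₂ = ((lam : ℂ)⁻¹) • (y₂ * x₁) := by
    have := RingQuot.mkAlgHom_rel ℂ (QW2Rel.xy (q₁ := q₁) (q₂ := q₂) (lam := lam))
    simpa [x₁, y₂, QW2gen, map_mul, map_smul] using this
  have hyx : y₁ * x₂ = ((q₁ * lam)⁻¹) • (x₂ * y₁) := by
    have h := RingQuot.mkAlgHom_rel ℂ (QW2Rel.xy' (q₁ := q₁) (q₂ := q₂) (lam := lam))
    have h' : x₂ * y₁ = (q₁ * lam) • (y₁ * x₂) := by
      simpa [x₂, y₁, QW2gen, map_mul, map_smul] using h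
    have hne : (q₁ * (lam : ℂ)) ≠ 0 := mul_ne_zero hq0 lam.ne_zero
    rw [h', smul_smul, inv_mul_cancel₀ hne, one_smul]
  rcases le_or_gt 0 k with hk | hk <;> rcases le_or_gt 0 l with hl | hl
  · simp only [Zword, if_pos hk, if_pos hl]
    rw [swap_pow hxx]
    congr 1
    rw [max_eq_left hl, mul_pow,
      show k * l = ((k.toNat * l.toNat : ℕ) : ℤ) by
        push_cast [Int.toNat_of_nonneg hk, Int.toNat_of_nonneg hl]; ring,
      zpow_natCast, zpow_natCast]
  · simp only [Zword, if_pos hk, if_neg (not_le.mpr hl)]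
    rw [swap_pow hxy]
    congr 1
    rw [max_eq_right hl.le, mul_zero, zpow_zero, one_mul, inv_pow,
      show k * l = -((k.toNat * (-l).toNat : ℕ) : ℤ) by
        push_cast [Int.toNat_of_nonneg hk, Int.toNat_of_nonneg (by omega : (0:ℤ) ≤ -l)]; ring,
      zpow_neg, zpow_natCast]
  · simp only [Zword, if_neg (not_le.mpr hk), if_pos hl]
    rw [swap_pow hyx]
    congr 1
    rw [max_eq_left hl, inv_pow, mul_pow, mul_inv,
      show k * l = -(((-k).toNat * l.toNat : ℕ) : ℤ) by
        push_cast [Int.toNat_of_nonneg hl, Int.toNat_of_nonneg (by omega : (0:ℤ) ≤ -k)]; ring,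
      zpow_neg, zpow_neg, zpow_natCast, zpow_natCast]
  · simp only [Zword, if_neg (not_le.mpr hk), if_neg (not_le.mpr hl)]
    rw [swap_pow hyy]
    congr 1
    rw [max_eq_right hl.le, mul_zero, zpow_zero, one_mul,
      show k * l = (((-k).toNat * (-l).toNat : ℕ) : ℤ) by
        push_cast [Int.toNat_of_nonneg (by omega : (0:ℤ) ≤ -k),
          Int.toNat_of_nonneg (by omega : (0:ℤ) ≤ -l)]; ring,
      zpow_natCast]
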